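/- For the metric Lie algebra on pseudo-orthonormal basis u1,u2,u3,u4 (⟨u1,u1⟩=⟨u2,u2⟩=⟨u3,u4⟩=1) with brackets [u1,u4]=γ1 u1 − γ2 u2 + γ3 u3, [u2,u4]=γ2 u1 + γ4 u2 + γ5 u3, [u3,u4]=γ6 u1 + γ7 u2 + γ8 u3, the scalar curvature equals (1/2)(γ6² + γ7²). In particular the scalar curvature vanishes if and only if γ6 = γ7 = 0. -/
import Mathlib


noncomputable section

open Finset Polynomial

abbrev V : Type := Fin 4 → ℝ

def e (i : Fin 4) : V := Pi.single i 1

/-- bilinear bracket determined by structure constants `c`. -/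
def br (c : Fin 4 → Fin 4 → V) (x y : V) : V :=
  ∑ i : Fin 4, ∑ j : Fin 4, (x i * y j) • c i j

/-- bilinear form determined by the matrix `G`. -/
def gmet (G : Matrix (Fin 4) (Fin 4) ℝ) (x y : V) : ℝ :=
  ∑ i : Fin 4, ∑ j : Fin 4, x i * y j * G i j

/-- `D` satisfies the Koszul formula of the Levi-Civita connection. -/
def Koszul (G : Matrix (Fin 4) (Fin 4) ℝ) (c : Fin 4 → Fin 4 → V) (D : V → V → V) : Prop :=
  ∀ x y z : V, 2 * gmet G (D x y) z =
    gmet G (br c x y) z - gmet G (br c y z) x + gmet G (br c z x) y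

/-- curvature tensor `R(x,y)z`. -/
def Rcurv (c : Fin 4 → Fin 4 → V) (D : V → V → V) (x y z : V) : V :=
  D x (D y z) - D y (D x z) - D (br c x y) z

/-- Ricci tensor `ρ(x,y) = tr (z ↦ R(z,x)y)`. -/
def ricciT (c : Fin 4 → Fin 4 → V) (D : V → V → V) (x y : V) : ℝ :=
  ∑ i : Fin 4, Rcurv c D (e i) x y i

/-- scalar curvature: metric trace of the Ricci tensor (here `G` is its own inverse). -/
def scalCurv (G : Matrix (Fin 4) (Fin 4) ℝ) (c : Fin 4 → Fin 4 → V) (D : V → V → V) : ℝ :=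
  ∑ i : Fin 4, ∑ j : Fin 4, G i j * ricciT c D (e i) (e j)

/-- metric with ⟨u1,u2⟩=⟨u3,u3⟩=⟨u4,u4⟩=1. -/
def Gpp : Matrix (Fin 4) (Fin 4) ℝ := !![0,1,0,0; 1,0,0,0; 0,0,1,0; 0,0,0,1]

/-- metric with ⟨u1,u1⟩=⟨u2,u2⟩=⟨u3,u4⟩=1. -/
def Gdeg : Matrix (Fin 4) (Fin 4) ℝ := !![1,0,0,0; 0,1,0,0; 0,0,0,1; 0,0,1,0]

/-- orthonormal metric with e4 timelike. -/
def Gort : Matrix (Fin 4) (Fin 4) ℝ := !![1,0,0,0; 0,1,0,0; 0,0,1,0; 0,0,0,-1]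

def c10 (g1 g2 g3 g4 g5 g6 g7 g8 : ℝ) : Fin 4 → Fin 4 → V :=
  let b14 : V := ![g1, -g2, g3, 0]
  let b24 : V := ![g2, g4, g5, 0]
  let b34 : V := ![g6, g7, g8, 0]
  ![![0, 0, 0, b14],
    ![0, 0, 0, b24],
    ![0, 0, 0, b34],
    ![-b14, -b24, -b34, 0]]

set_option maxHeartbeats 2000000 in
/-- scalar curvature equals (1/2)(γ6²+γ7²), vanishing iff γ6=γ7=0. -/
theorem stmt10 (g1 g2 g3 g4 g5 g6 g7 g8 : ℝ) (D : V → V → V)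
    (hD : Koszul Gdeg (c10 g1 g2 g3 g4 g5 g6 g7 g8) D) :
    scalCurv Gdeg (c10 g1 g2 g3 g4 g5 g6 g7 g8) D = (1/2) * (g6^2 + g7^2) ∧
    (scalCurv Gdeg (c10 g1 g2 g3 g4 g5 g6 g7 g8) D = 0 ↔ g6 = 0 ∧ g7 = 0) := by
  classical
  set c := c10 g1 g2 g3 g4 g5 g6 g7 g8 with hc
  set sl : Array Nat := #[] with hsl  -- dummy
  clear hsl sl
  have hF : ∀ x y : V, D x y = ![
      g1*x 0*y 3 - g2*x 3*y 1 + g3*x 3*y 3 + (g6/2)*(x 2*y 3 - x 3*y 2),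
      g2*x 3*y 0 + g4*x 1*y 3 + g5*x 3*y 3 + (g7/2)*(x 2*y 3 - x 3*y 2),
      -(g1*x 0*y 0) - g4*x 1*y 1 - g3*x 3*y 0 - g5*x 3*y 1 - g8*x 3*y 2
        - (g6/2)*(x 0*y 2 + x 2*y 0) - (g7/2)*(x 1*y 2 + x 2*y 1),
      g8*x 3*y 3 + (g6/2)*(x 0*y 3 + x 3*y 0) + (g7/2)*(x 1*y 3 + x 3*y 1)] := by
    intro x y
    funext k
    fin_cases k
    · show D x y 0 = _
      have h := hD x y (e 0)
      simp [hc, gmet, br, c10, Gdeg, e, Fin.sum_univ_four, Pi.single_apply,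
        Finset.sum_apply, Pi.smul_apply, smul_eq_mul, Matrix.cons_val_zero,
        Matrix.cons_val_one, Matrix.head_cons, Matrix.cons_val', Matrix.cons_val_fin_one,
        Matrix.empty_val', Matrix.of_apply, Matrix.vecHead, Matrix.vecTail,
        Function.comp_apply, Fin.succ] at h ⊢
      linarith
    · show D x y 1 = _
      have h := hD x y (e 1)
      simp [hc, gmet, br, c10, Gdeg, e, Fin.sum_univ_four, Pi.single_apply,
        Finset.sum_apply, Pi.smul_apply, smul_eq_mul, Matrix.cons_val_zero,
        Matrix.cons_val_one, Matrix.head_cons, Matrix.cons_val', Matrix.cons_val_fin_one,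
        Matrix.empty_val', Matrix.of_apply, Matrix.vecHead, Matrix.vecTail,
        Function.comp_apply, Fin.succ] at h ⊢
      linarith
    · show D x y 2 = _
      have h := hD x y (e 3)
      simp [hc, gmet, br, c10, Gdeg, e, Fin.sum_univ_four, Pi.single_apply,
        Finset.sum_apply, Pi.smul_apply, smul_eq_mul, Matrix.cons_val_zero,
        Matrix.cons_val_one, Matrix.head_cons, Matrix.cons_val', Matrix.cons_val_fin_one,
        Matrix.empty_val', Matrix.of_apply, Matrix.vecHead, Matrix.vecTail,
        Function.comp_apply, Fin.succ] at h ⊢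
      linarith
    · show D x y 3 = _
      have h := hD x y (e 2)
      simp [hc, gmet, br, c10, Gdeg, e, Fin.sum_univ_four, Pi.single_apply,
        Finset.sum_apply, Pi.smul_apply, smul_eq_mul, Matrix.cons_val_zero,
        Matrix.cons_val_one, Matrix.head_cons, Matrix.cons_val', Matrix.cons_val_fin_one,
        Matrix.empty_val', Matrix.of_apply, Matrix.vecHead, Matrix.vecTail,
        Function.comp_apply, Fin.succ] at h ⊢
      linarith
  have hs : scalCurv Gdeg c D = (1/2) * (g6^2 + g7^2) := by
    simp only [scalCurv, ricciT, Rcurv, Fin.sum_univ_four, Pi.sub_apply, hF]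
    simp [hc, br, c10, Gdeg, e, Fin.sum_univ_four, Pi.single_apply,
      Finset.sum_apply, Pi.smul_apply, smul_eq_mul, Matrix.cons_val_zero,
      Matrix.cons_val_one, Matrix.head_cons, Matrix.cons_val', Matrix.cons_val_fin_one,
      Matrix.empty_val', Matrix.of_apply, Matrix.vecHead, Matrix.vecTail,
      Function.comp_apply, Fin.succ]
    norm_num
    ring
  refine ⟨hs, ?_⟩
  rw [hs]
  constructor
  · intro h
    constructor <;> nlinarith [sq_nonneg g6, sq_nonneg g7]
  · rintro ⟨h6, h7⟩
    rw [h6, h7]; ring
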